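/- Let G be a chain transitive free semigroup action on a compact metric space X. If for every ε > 0 the greatest common divisor of the set T_ε(x) of lengths of (w,ε)-chains from x to itself equals 1 (for some, equivalently every, x ∈ X), then G is chain mixing. -/

import Mathlib

open Metric Filter Set
open scoped Classical

noncomputable section

variable {X : Type*} [MetricSpace X] {Y : Type*} [MetricSpace Y] {ι κ : Type*}

/-- `c` satisfies the `(w, δ)`-chain condition along the word `w`. -/
def IsChainSeq (f : ι → X → X) (w : List ι) (δ : ℝ) (c : ℕ → X) : Prop :=
  ∀ (j : ℕ) (h : j < w.length), dist (f (w.get ⟨j, h⟩) (c j)) (c (j + 1)) ≤ δ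

/-- There is a `(w, δ)`-chain from `a` to `b` with `|w| = n`. -/
def ChainFrom (f : ι → X → X) (δ : ℝ) (a b : X) (n : ℕ) : Prop :=
  ∃ w : List ι, w.length = n ∧ ∃ c : ℕ → X, IsChainSeq f w δ c ∧ c 0 = a ∧ c n = b

/-- `x` is a chain recurrent point of the action generated by `f`. -/
def ChainRecurrentPt (f : ι → X → X) (x : X) : Prop :=
  ∀ ε : ℝ, 0 < ε → ∃ n : ℕ, 0 < n ∧ ChainFrom f ε x x n

/-- The action generated by `f` is chain recurrent. -/
def ChainRecurrent (f : ι → X → X) : Prop := ∀ x : X, ChainRecurrentPt f x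

/-- The action generated by `f` is chain transitive. -/
def ChainTransitive (f : ι → X → X) : Prop :=
  ∀ ε : ℝ, 0 < ε → ∀ a b : X, ∃ n : ℕ, 0 < n ∧ ChainFrom f ε a b n

/-- The action generated by `f` is chain mixing. -/
def ChainMixing (f : ι → X → X) : Prop :=
  ∀ ε : ℝ, 0 < ε → ∃ N : ℕ, 0 < N ∧ ∀ a b : X, ∀ n : ℕ, N ≤ n → ChainFrom f ε a b n

/-- The `ε`-chain recurrence time `r_ε(x, G)`. -/
def rTime (f : ι → X → X) (ε : ℝ) (x : X) : ℕ :=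
  sInf {n : ℕ | 0 < n ∧ ChainFrom f ε x x n}

/-- `r_ε(G) = max_x r_ε(x, G)`. -/
def rTimeSup (f : ι → X → X) (ε : ℝ) : ℕ :=
  sSup (Set.range fun x : X => rTime f ε x)

/-- The chain mixing time `m_ε(x, δ, G)`. -/
def mTime (f : ι → X → X) (ε δ : ℝ) (x : X) : ℕ :=
  sInf {N : ℕ | ∀ n : ℕ, N ≤ n → ∀ y : X, ∃ z : X, dist z x < δ ∧ ChainFrom f ε z y n}

/-- `m_ε(δ, G) = max_x m_ε(x, δ, G)`. -/
def mTimeSup (f : ι → X → X) (ε δ : ℝ) : ℕ :=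
  sSup (Set.range fun x : X => mTime f ε δ x)

/-- `f_w = f_{i₀} ∘ f_{i₁} ∘ ⋯ ∘ f_{i_{k-1}}` applied to `x`. -/
def applyWord (f : ι → X → X) (w : List ι) (x : X) : X := w.foldr f x

/-- The generators of `G^k`, indexed by the words of length `k`. -/
def powerGens (f : ι → X → X) (k : ℕ) : (Fin k → ι) → X → X :=
  fun u => applyWord f (List.ofFn u)

/-- The generators `f_j × g_k` of the product action `G × H`. -/
def prodGens (f : ι → X → X) (g : κ → Y → Y) : ι × κ → X × Y → X × Y :=
  fun p z => (f p.1 z.1, g p.2 z.2)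

/-- `T_ε(x)`: the set of lengths of `(w, ε)`-chains from `x` to itself. -/
def Tset (f : ι → X → X) (ε : ℝ) (x : X) : Set ℕ :=
  {n : ℕ | 0 < n ∧ ChainFrom f ε x x n}

/-- `k = gcd T` for a set `T ⊆ ℕ`. -/
def IsGCDOf (T : Set ℕ) (k : ℕ) : Prop :=
  (∀ t ∈ T, k ∣ t) ∧ ∀ d : ℕ, (∀ t ∈ T, d ∣ t) → d ∣ k

/-- `x ∼_ε y`: there is an `(w, ε)`-chain from `x` to `y` whose length is a multiple of `k`. -/
def RelEps (f : ι → X → X) (ε : ℝ) (k : ℕ) (x y : X) : Prop :=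
  ∃ n : ℕ, 0 < n ∧ k ∣ n ∧ ChainFrom f ε x y n

/-- The orbit segment: the first `j` letters of `w` applied, in order, to `x`. -/
def orbitSeg (f : ι → X → X) (w : List ι) (x : X) (j : ℕ) : X :=
  (w.take j).foldl (fun y i => f i y) x

/-- The Bowen-type word metric `d_w`. -/
def wordDist (f : ι → X → X) (w : List ι) (x y : X) : ℝ :=
  ⨆ j : Fin (w.length + 1), dist (orbitSeg f w x (j : ℕ)) (orbitSeg f w y (j : ℕ))

/-- `N(w, ε, G)`: maximal cardinality of a `(w, ε, G)`-separated subset of `X`. -/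
def sepMax (f : ι → X → X) (w : List ι) (ε : ℝ) : ℕ :=
  sSup {k : ℕ | ∃ K : Finset X,
    (∀ x ∈ K, ∀ y ∈ K, x ≠ y → ε ≤ wordDist f w x y) ∧ K.card = k}

/-- Bufetov's topological entropy `h(G)` of a free semigroup action. -/
def topEntropy {m : ℕ} (f : Fin m → X → X) : ℝ :=
  ⨆ ε : {e : ℝ // 0 < e},
    Filter.limsup (fun n : ℕ =>
      Real.log ((∑ w : Fin n → Fin m, (sepMax f (List.ofFn w) ε.1 : ℝ)) / (m : ℝ) ^ n) / (n : ℝ))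
      Filter.atTop

/-- `N*(w, ε, δ, G)`: maximal cardinality of a `(w, ε, δ, G)`-pseudo-separated set. -/
def pseudoSepMax (f : ι → X → X) (w : List ι) (ε δ : ℝ) : ℕ :=
  sSup {k : ℕ | ∃ K : Finset (ℕ → X),
    (∀ c ∈ K, IsChainSeq f w δ c) ∧
    (∀ c ∈ K, ∀ c' ∈ K, c ≠ c' → ∃ j : ℕ, j < w.length ∧ ε < dist (c j) (c' j)) ∧
    K.card = k}

/-- `B*(w, ε, δ, G)`: minimal cardinality of a `(w, ε, δ, G)`-pseudo-spanning set. -/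
def pseudoSpanMin (f : ι → X → X) (w : List ι) (ε δ : ℝ) : ℕ :=
  sInf {k : ℕ | ∃ K : Finset (ℕ → X),
    (∀ c ∈ K, IsChainSeq f w δ c) ∧
    (∀ c : ℕ → X, IsChainSeq f w δ c →
      ∃ c' ∈ K, ∀ j : ℕ, j < w.length → dist (c j) (c' j) ≤ ε) ∧
    K.card = k}

/-- The pseudo-entropy `h*(G)` of a free semigroup action. -/
def pseudoEntropy {m : ℕ} (f : Fin m → X → X) : ℝ :=
  ⨆ ε : {e : ℝ // 0 < e}, ⨅ δ : {d : ℝ // 0 < d},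
    Filter.limsup (fun n : ℕ =>
      Real.log ((∑ w : Fin n → Fin m, (pseudoSepMax f (List.ofFn w) ε.1 δ.1 : ℝ)) / (m : ℝ) ^ n)
        / (n : ℝ)) Filter.atTop

/-- The metric `d'(ω, ω') = m^{-k}`, `k = inf {n | ωₙ ≠ ω'ₙ}`, on `Σ_m^+ = ℕ → Fin m`. -/
def sigmaDist (m : ℕ) (ω ω' : ℕ → Fin m) : ℝ :=
  if h : ∃ n : ℕ, ω n ≠ ω' n then (1 / (m : ℝ)) ^ Nat.find h else 0

/-- The metric `D = max {d', d}` on `Σ_m^+ × X`. -/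
def skewDist (m : ℕ) (p q : (ℕ → Fin m) × X) : ℝ :=
  max (sigmaDist m p.1 q.1) (dist p.2 q.2)

/-- The skew-product transformation `F(ω, x) = (σ ω, f_{ω 0} x)`. -/
def skewMap {m : ℕ} (f : Fin m → X → X) : (ℕ → Fin m) × X → (ℕ → Fin m) × X :=
  fun p => (fun n => p.1 (n + 1), f (p.1 0) p.2)

/-- `c` is a `δ`-pseudo-orbit of length `n + 1` of the single map `F`,
w.r.t. the distance function `D`. -/
def IsPseudoOrbit {Z : Type*} (D : Z → Z → ℝ) (F : Z → Z) (n : ℕ) (δ : ℝ) (c : ℕ → Z) : Prop :=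
  ∀ j : ℕ, j < n → D (F (c j)) (c (j + 1)) ≤ δ

/-- `N*(n, ε, δ, F)` for a single map `F` w.r.t. a distance function `D`. -/
def pseudoSepMaxMap {Z : Type*} (D : Z → Z → ℝ) (F : Z → Z) (n : ℕ) (ε δ : ℝ) : ℕ :=
  sSup {k : ℕ | ∃ K : Finset (ℕ → Z),
    (∀ c ∈ K, IsPseudoOrbit D F n δ c) ∧
    (∀ c ∈ K, ∀ c' ∈ K, c ≠ c' → ∃ j : ℕ, j < n ∧ ε < D (c j) (c' j)) ∧
    K.card = k}

/-- `B*(n, ε, δ, F)` for a single map `F` w.r.t. a distance function `D`. -/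
def pseudoSpanMinMap {Z : Type*} (D : Z → Z → ℝ) (F : Z → Z) (n : ℕ) (ε δ : ℝ) : ℕ :=
  sInf {k : ℕ | ∃ K : Finset (ℕ → Z),
    (∀ c ∈ K, IsPseudoOrbit D F n δ c) ∧
    (∀ c : ℕ → Z, IsPseudoOrbit D F n δ c →
      ∃ c' ∈ K, ∀ j : ℕ, j ≤ n → D (c j) (c' j) ≤ ε) ∧
    K.card = k}

/-- The pseudo-entropy `h*(F)` of a single map `F` w.r.t. a distance function `D`. -/
def pseudoEntropyMap {Z : Type*} (D : Z → Z → ℝ) (F : Z → Z) : ℝ :=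
  ⨆ ε : {e : ℝ // 0 < e}, ⨅ δ : {d : ℝ // 0 < d},
    Filter.limsup (fun n : ℕ =>
      Real.log (pseudoSepMaxMap D F n ε.1 δ.1 : ℝ) / (n : ℝ)) Filter.atTop

/-- An `ε`-chain of length `n` from `a` to `b` for a single map. -/
def ChainFromMap {Z : Type*} (D : Z → Z → ℝ) (F : Z → Z) (δ : ℝ) (a b : Z) (n : ℕ) : Prop :=
  ∃ c : ℕ → Z, IsPseudoOrbit D F n δ c ∧ c 0 = a ∧ c n = b

/-- `r_ε(z, F)` for a single map. -/
def rTimeMap {Z : Type*} (D : Z → Z → ℝ) (F : Z → Z) (ε : ℝ) (z : Z) : ℕ :=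
  sInf {n : ℕ | 0 < n ∧ ChainFromMap D F ε z z n}

/-- `r_ε(F)` for a single map. -/
def rTimeMapSup {Z : Type*} (D : Z → Z → ℝ) (F : Z → Z) (ε : ℝ) : ℕ :=
  sSup (Set.range fun z : Z => rTimeMap D F ε z)

/-- `m_ε(z, δ, F)` for a single map. -/
def mTimeMap {Z : Type*} (D : Z → Z → ℝ) (F : Z → Z) (ε δ : ℝ) (z : Z) : ℕ :=
  sInf {N : ℕ | ∀ n : ℕ, N ≤ n → ∀ y : Z, ∃ z' : Z, D z' z < δ ∧ ChainFromMap D F ε z' y n}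

/-- `m_ε(δ, F)` for a single map. -/
def mTimeMapSup {Z : Type*} (D : Z → Z → ℝ) (F : Z → Z) (ε δ : ℝ) : ℕ :=
  sSup (Set.range fun z : Z => mTimeMap D F ε δ z)

/-- `N_δ(X)`: the smallest number of sets of diameter at most `δ` that cover `X`. -/
def coverNum (X : Type*) [MetricSpace X] (δ : ℝ) : ℕ :=
  sInf {k : ℕ | ∃ S : Finset (Set X),
    (∀ s ∈ S, Metric.diam s ≤ δ) ∧ (⋃ s ∈ S, s) = Set.univ ∧ S.card = k}

/-- The upper box dimension of `X`. -/
def upperBoxDim (X : Type*) [MetricSpace X] : ℝ :=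
  Filter.limsup (fun δ : ℝ => Real.log (coverNum X δ : ℝ) / (-Real.log δ))
    (nhdsWithin 0 (Set.Ioi 0))

/-- The lower box dimension of `X`. -/
def lowerBoxDim (X : Type*) [MetricSpace X] : ℝ :=
  Filter.liminf (fun δ : ℝ => Real.log (coverNum X δ : ℝ) / (-Real.log δ))
    (nhdsWithin 0 (Set.Ioi 0))

end


section AuxStmt18

variable {X : Type*} [MetricSpace X] {ι : Type*}

lemma chainFrom_mono {f : ι → X → X} {δ δ' : ℝ} {a b : X} {n : ℕ}
    (h : ChainFrom f δ a b n) (hle : δ ≤ δ') : ChainFrom f δ' a b n := by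
  obtain ⟨w, hw, c, hc, h0, hn⟩ := h
  exact ⟨w, hw, c, fun j hj => le_trans (hc j hj) hle, h0, hn⟩

lemma chainFrom_trans {f : ι → X → X} {δ : ℝ} {a b c : X} {n k : ℕ}
    (h1 : ChainFrom f δ a b n) (h2 : ChainFrom f δ b c k) :
    ChainFrom f δ a c (n + k) := by
  obtain ⟨w1, hw1, c1, hc1, h10, h1n⟩ := h1
  obtain ⟨w2, hw2, c2, hc2, h20, h2k⟩ := h2
  refine ⟨w1 ++ w2, by simp [hw1, hw2], fun j => if j < n then c1 j else c2 (j - n), ?_, ?_, ?_⟩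
  · intro j hj
    have hjlen : j < n + k := by simpa [hw1, hw2] using hj
    by_cases h : j < n
    · have hj1 : j < w1.length := by omega
      have hget : (w1 ++ w2).get ⟨j, hj⟩ = w1.get ⟨j, hj1⟩ := by
        simp only [List.get_eq_getElem]
        exact List.getElem_append_left hj1
      rw [hget]
      by_cases h' : j + 1 < n
      · simpa [h, h'] using hc1 j hj1
      · have hjn : j + 1 = n := by omega
        have : c2 (j + 1 - n) = c1 (j + 1) := by
          rw [hjn]; simp [h20, ← h1n, hw1]
        simp only [if_pos h, if_neg (show ¬ j + 1 < n by omega), this]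
        exact hc1 j hj1
    · have hj2 : j - n < w2.length := by omega
      have hget : (w1 ++ w2).get ⟨j, hj⟩ = w2.get ⟨j - n, hj2⟩ := by
        simp only [List.get_eq_getElem]
        rw [List.getElem_append_right (show w1.length ≤ j by omega)]
        simp only [hw1]
      rw [hget]
      have h' : ¬ j + 1 < n := by omega
      have hsub : j + 1 - n = (j - n) + 1 := by omega
      simp only [if_neg h, if_neg h', hsub]
      exact hc2 (j - n) hj2
  · rcases Nat.eq_zero_or_pos n with h | h
    · subst h
      simp only [if_neg (lt_irrefl 0), Nat.sub_zero]
      rw [h20, ← h1n, h10]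
    · simp [h, h10]
  · have : ¬ n + k < n := by omega
    simp [this, h2k]

lemma chainFrom_start {f : ι → X → X} {ε' : ℝ} {a p z : X} {n : ℕ}
    (h : ChainFrom f ε' p z n) (hn : 0 < n)
    (ha : ∀ i, dist (f i a) (f i p) ≤ ε') : ChainFrom f (ε' + ε') a z n := by
  obtain ⟨w, hw, c, hc, h0, hnn⟩ := h
  have hε' : 0 ≤ ε' := le_trans dist_nonneg (ha (w.get ⟨0, by omega⟩))
  refine ⟨w, hw, fun j => if j = 0 then a else c j, ?_, by simp, ?_⟩
  · intro j hj
    rcases Nat.eq_zero_or_pos j with h | h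
    · subst h
      simp only [if_pos rfl, if_neg (Nat.one_ne_zero)]
      calc dist (f (w.get ⟨0, hj⟩) a) (c 1)
          ≤ dist (f (w.get ⟨0, hj⟩) a) (f (w.get ⟨0, hj⟩) p) + dist (f (w.get ⟨0, hj⟩) p) (c 1) :=
            dist_triangle _ _ _
        _ ≤ ε' + ε' := add_le_add (ha _) (by rw [← h0]; exact hc 0 hj)
    · simp only [if_neg (by omega : ¬ j = 0), if_neg (by omega : ¬ j + 1 = 0)]
      exact le_trans (hc j hj) (by linarith)
  · simp [Nat.pos_iff_ne_zero.mp hn, hnn]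

lemma chainFrom_end {f : ι → X → X} {ε' δ' : ℝ} {a q b : X} {n : ℕ}
    (h : ChainFrom f ε' a q n) (hn : 0 < n) (hq : dist q b ≤ δ') :
    ChainFrom f (ε' + δ') a b n := by
  obtain ⟨w, hw, c, hc, h0, hnn⟩ := h
  have hδ' : 0 ≤ δ' := le_trans dist_nonneg hq
  refine ⟨w, hw, fun j => if j = n then b else c j, ?_, ?_, by simp⟩
  case refine_2 => simp only [if_neg (show (0:ℕ) ≠ n by omega)]; exact h0
  · intro j hj
    have hjn : j < n := by omega
    simp only [if_neg (by omega : ¬ j = n)]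
    by_cases h' : j + 1 = n
    · simp only [if_pos h']
      calc dist (f (w.get ⟨j, hj⟩) (c j)) b
          ≤ dist (f (w.get ⟨j, hj⟩) (c j)) (c (j+1)) + dist (c (j+1)) b := dist_triangle _ _ _
        _ ≤ ε' + δ' := add_le_add (hc j hj) (by rw [h', hnn]; exact hq)
    · simp only [if_neg h']
      exact le_trans (hc j hj) (by linarith)

-- multiples and combinations stay in T
lemma addclosed_smul {T : Set ℕ} (hT : ∀ a ∈ T, ∀ b ∈ T, a + b ∈ T)
    {x : ℕ} (hx : x ∈ T) : ∀ k, 1 ≤ k → k * x ∈ T := by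
  intro k hk
  induction k with
  | zero => omega
  | succ k ih =>
    rcases Nat.eq_zero_or_pos k with h | h
    · simpa [h] using hx
    · have := hT _ (ih h) _ hx
      simpa [Nat.succ_mul] using this

lemma numer_lemma {T : Set ℕ} (hT : ∀ a ∈ T, ∀ b ∈ T, a + b ∈ T)
    (hgcd : IsGCDOf T 1) : ∃ N : ℕ, ∀ n, N ≤ n → n ∈ T := by
  -- Step 1: find a ≥ 1 with a ∈ T and a + 1 ∈ T
  obtain ⟨a, ha1, haT, haT1⟩ : ∃ a : ℕ, 1 ≤ a ∧ a ∈ T ∧ a + 1 ∈ T := by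
    set H : AddSubgroup ℤ := AddSubgroup.closure ((fun n : ℕ => (n : ℤ)) '' T) with hH
    obtain ⟨g, hg⟩ := Int.subgroup_cyclic H
    have hdvd : ∀ t ∈ T, g ∣ (t : ℤ) := by
      intro t ht
      have : (t : ℤ) ∈ H := AddSubgroup.subset_closure ⟨t, ht, rfl⟩
      rw [hg, AddSubgroup.mem_closure_singleton] at this
      obtain ⟨n, hn⟩ := this
      exact ⟨n, by rw [← hn, smul_eq_mul, mul_comm]⟩
    have hg1 : g.natAbs ∣ 1 := by
      apply hgcd.2
      intro t ht
      exact Int.natAbs_dvd_natAbs.mpr (by simpa using hdvd t ht)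
    have hgH : g ∈ H := by
      rw [hg]
      exact AddSubgroup.subset_closure rfl
    have h1H : (1 : ℤ) ∈ H := by
      have hna : g.natAbs = 1 := Nat.dvd_one.mp hg1
      rcases Int.natAbs_eq g with h | h
      · rw [hna] at h
        push_cast at h
        rwa [← h]
      · rw [hna] at h
        push_cast at h
        have := AddSubgroup.neg_mem H hgH
        rw [h] at this
        simpa using this
    -- decompose 1 as difference of elements of the additive closure
    have key : ∀ x : ℤ, x ∈ H → ∃ p q : ℕ, (p = 0 ∨ p ∈ T) ∧ (q = 0 ∨ q ∈ T) ∧ x = (p : ℤ) - q := by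
      intro x hx
      rw [hH] at hx
      induction hx using AddSubgroup.closure_induction with
      | mem y hy =>
        obtain ⟨t, ht, rfl⟩ := hy
        exact ⟨t, 0, Or.inr ht, Or.inl rfl, by simp⟩
      | zero => exact ⟨0, 0, Or.inl rfl, Or.inl rfl, by simp⟩
      | add y z hy hz ihy ihz =>
        obtain ⟨p1, q1, hp1, hq1, rfl⟩ := ihy
        obtain ⟨p2, q2, hp2, hq2, rfl⟩ := ihz
        refine ⟨p1 + p2, q1 + q2, ?_, ?_, by push_cast; ring⟩
        · rcases hp1 with h | h <;> rcases hp2 with h' | h'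
          · exact Or.inl (by omega)
          · exact Or.inr (by simpa [h] using h')
          · exact Or.inr (by simpa [h'] using h)
          · exact Or.inr (hT _ h _ h')
        · rcases hq1 with h | h <;> rcases hq2 with h' | h'
          · exact Or.inl (by omega)
          · exact Or.inr (by simpa [h] using h')
          · exact Or.inr (by simpa [h'] using h)
          · exact Or.inr (hT _ h _ h')
      | neg y hy ihy =>
        obtain ⟨p, q, hp, hq, rfl⟩ := ihy
        exact ⟨q, p, hq, hp, by ring⟩
    obtain ⟨p, q, hp, hq, hpq⟩ := key 1 h1H
    have hpq' : p = q + 1 := by omega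
    rcases hq with h | h
    · -- q = 0, so p = 1 ∈ T
      have hpT : p ∈ T := hp.resolve_left (by omega)
      rw [hpq', h] at hpT
      simp only [Nat.zero_add] at hpT
      exact ⟨1, le_refl 1, hpT, hT _ hpT _ hpT⟩
    · have hpT : p ∈ T := hp.resolve_left (by omega)
      rcases Nat.eq_zero_or_pos q with h0 | h0
      · subst h0
        have h1T : (1 : ℕ) ∈ T := by simpa [hpq'] using hpT
        exact ⟨1, le_refl 1, h1T, hT _ h1T _ h1T⟩
      · exact ⟨q, h0, h, hpq' ▸ hpT⟩
  -- Step 2: all n ≥ a * a are in T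
  refine ⟨a * a, fun n hn => ?_⟩
  have ha0 : 0 < a := ha1
  set q := n / a with hq
  set r := n % a with hr
  have hrlt : r < a := Nat.mod_lt _ ha0
  have hqa : a ≤ q := Nat.le_div_iff_mul_le ha0 |>.mpr (by nlinarith)
  have hrep : n = a * (q - r) + (a + 1) * r := by
    have h2 : a * q + r = n := Nat.div_add_mod n a
    have h3 : (q - r) + r = q := by omega
    calc n = a * q + r := h2.symm
    _ = a * ((q - r) + r) + r := by rw [h3]
    _ = a * (q - r) + (a + 1) * r := by ring
  rw [hrep]
  have hqr1 : 1 ≤ q - r := by omega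
  have h1 : a * (q - r) ∈ T := by
    have := addclosed_smul hT haT (q - r) hqr1
    simpa [Nat.mul_comm] using this
  rcases Nat.eq_zero_or_pos r with h | h
  · simpa [h] using h1
  · have h2 := addclosed_smul hT haT1 r h
    have := hT _ h1 _ (by simpa [Nat.mul_comm] using h2)
    simpa [Nat.mul_comm] using this

end AuxStmt18

theorem stmt18 {X : Type*} [MetricSpace X] [CompactSpace X] {m : ℕ}
    (f : Fin m → X → X) (hf : ∀ i, Continuous (f i)) (hct : ChainTransitive f)
    (hgcd : ∀ ε : ℝ, 0 < ε → ∀ x : X, IsGCDOf (Tset f ε x) 1) :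
    ChainMixing f := by
  rcases isEmpty_or_nonempty X with hX | hX
  · exact fun ε hε => ⟨1, one_pos, fun a => (IsEmpty.false a).elim⟩
  rcases Nat.eq_zero_or_pos m with hm | hm
  · exfalso
    obtain ⟨x⟩ := hX
    obtain ⟨n, hn, w, hwlen, -⟩ := hct 1 one_pos x x
    subst hm
    exact (w.get ⟨0, by omega⟩).elim0
  intro ε hε
  set ε' := ε / 2 with hε'def
  have hε' : 0 < ε' := by positivity
  -- uniform continuity: a single δ
  have hδi : ∀ i : Fin m, ∃ δ : ℝ, 0 < δ ∧
      ∀ x y : X, dist x y < δ → dist (f i x) (f i y) < ε' := by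
    intro i
    have := CompactSpace.uniformContinuous_of_continuous (hf i)
    rw [Metric.uniformContinuous_iff] at this
    obtain ⟨δ, hδ, h⟩ := this ε' hε'
    exact ⟨δ, hδ, fun x y hxy => h hxy⟩
  choose δf hδfpos hδf using hδi
  have hFm : (Finset.univ : Finset (Fin m)).Nonempty := ⟨⟨0, hm⟩, Finset.mem_univ _⟩
  set δ : ℝ := min ε' (Finset.univ.inf' hFm δf) with hδdef
  have hδpos : 0 < δ := lt_min hε' (by rw [Finset.lt_inf'_iff]; exact fun i _ => hδfpos i)
  have hδε' : δ ≤ ε' := min_le_left _ _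
  have hδle : ∀ i, δ ≤ δf i := fun i =>
    le_trans (min_le_right _ _) (Finset.inf'_le _ (Finset.mem_univ i))
  -- finite δ-net
  obtain ⟨t, -, htfin, htcov⟩ := finite_cover_balls_of_compact (isCompact_univ (X := X)) hδpos
  set s : Finset X := htfin.toFinset with hsdef
  have hscov : ∀ a : X, ∃ p ∈ s, dist a p < δ := by
    intro a
    obtain ⟨p, hp, hap⟩ := Set.mem_iUnion₂.mp (htcov (Set.mem_univ a))
    exact ⟨p, htfin.mem_toFinset.mpr hp, mem_ball.mp hap⟩
  -- base point
  obtain ⟨z⟩ := hX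
  -- chain lengths to and from z
  have hto : ∀ x : X, ∃ n : ℕ, 0 < n ∧ ChainFrom f ε' x z n := fun x => hct ε' hε' x z
  have hfrom : ∀ x : X, ∃ n : ℕ, 0 < n ∧ ChainFrom f ε' z x n := fun x => hct ε' hε' z x
  choose Nto hNto hCto using hto
  choose Nfrom hNfrom hCfrom using hfrom
  set A : ℕ := s.sup Nto with hA
  set B : ℕ := s.sup Nfrom with hB
  -- loops at z fill all long lengths
  have hTadd : ∀ a ∈ Tset f ε' z, ∀ b ∈ Tset f ε' z, a + b ∈ Tset f ε' z := by
    intro a ha b hb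
    have h1 := ha.1
    exact ⟨by omega, chainFrom_trans ha.2 hb.2⟩
  obtain ⟨N₀, hN₀⟩ := numer_lemma hTadd (hgcd ε' hε' z)
  refine ⟨A + B + N₀ + 1, by omega, fun a b n hn => ?_⟩
  obtain ⟨p, hps, hap⟩ := hscov a
  obtain ⟨q, hqs, hbq⟩ := hscov b
  have hNpA : Nto p ≤ A := Finset.le_sup hps
  have hNqB : Nfrom q ≤ B := Finset.le_sup hqs
  -- chain 1 : a → z with error ε
  have hchain1 : ChainFrom f ε a z (Nto p) := by
    have := chainFrom_start (a := a) (hCto p) (hNto p)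
      (fun i => le_of_lt (hδf i a p (lt_of_lt_of_le hap (hδle i))))
    rwa [show ε' + ε' = ε by rw [hε'def]; ring] at this
  -- chain 3 : z → b with error ε
  have hchain3 : ChainFrom f ε z b (Nfrom q) := by
    have := chainFrom_end (b := b) (hCfrom q) (hNfrom q)
      (le_of_lt (lt_of_lt_of_le (dist_comm b q ▸ hbq) hδε'))
    exact chainFrom_mono this (by rw [hε'def]; linarith)
  -- chain 2 : loop at z of length n - Nto p - Nfrom q
  set u : ℕ := n - Nto p - Nfrom q with hu
  have huT : u ∈ Tset f ε' z := hN₀ u (by omega)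
  have hchain2 : ChainFrom f ε z z u := chainFrom_mono huT.2 (by rw [hε'def]; linarith)
  have := chainFrom_trans (chainFrom_trans hchain1 hchain2) hchain3
  rwa [show Nto p + u + Nfrom q = n by omega] at this
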